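/- Let A be a finite set and ρ = ⊗_{i∈ℤ} ρ_i a product probability measure on A^ℤ, nonsingular for the left shift and satisfying the Doeblin condition. Then for every k ∈ ℤ⁺ and every c = (c_0, …, c_{k−1}) ∈ A^k, the series ∑_{i∈ℤ} ( ρ_i^{⊕k}(c) − ρ_i^{⊗k}(c) )² converges, where ρ_i^{⊕k}(c) = ∏_{j=0}^{k−1} ρ_{i+j}(c_j) and ρ_i^{⊗k}(c) = ∏_{j=0}^{k−1} ρ_i(c_j). -/

import Mathlib

open MeasureTheory Filter Set Topology
open scoped ENNReal NNReal
set_option linter.unusedSectionVars false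
set_option linter.unusedVariables false
set_option maxHeartbeats 1000000

/-- The cylinder set of points agreeing with `y` on the finite coordinate set `s`. -/
def cylinder {A : Type*} (s : Finset ℤ) (y : ℤ → A) : Set (ℤ → A) :=
  {x | ∀ i ∈ s, x i = y i}

/-- `μ` is the product measure on `A^ℤ` with marginals `ρ i`. -/
def IsProductMeasure {A : Type*} [MeasurableSpace A]
    (μ : Measure (ℤ → A)) (ρ : ℤ → A → ℝ) : Prop :=
  ∀ (s : Finset ℤ) (y : ℤ → A), μ (cylinder s y) = ∏ i ∈ s, ENNReal.ofReal (ρ i (y i))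

/-- The left shift on `A^ℤ`. -/
def shift {A : Type*} : (ℤ → A) → (ℤ → A) := fun x i => x (i + 1)

/-- Two measures are equivalent if they have the same null sets. -/
def MeasEquiv {X : Type*} [MeasurableSpace X] (μ ν : Measure X) : Prop :=
  μ ≪ ν ∧ ν ≪ μ

/-- `p` is a probability vector. -/
def IsProbVec {A : Type*} [Fintype A] (p : A → ℝ) : Prop :=
  (∀ a, 0 ≤ p a) ∧ ∑ a, p a = 1

/-- `ρ_i^{⊕k}(c) = ∏_{j<k} ρ_{i+j}(c_j)`. -/
noncomputable def blockProb {A : Type*} [Fintype A] (ρ : ℤ → A → ℝ) (i : ℤ) {k : ℕ}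
    (c : Fin k → A) : ℝ :=
  ∏ j : Fin k, ρ (i + (j.val : ℤ)) (c j)

lemma mem_cyl {A : Type*} {s : Finset ℤ} {y : ℤ → A} {x : ℤ → A} :
    x ∈ cylinder s y ↔ ∀ i ∈ s, x i = y i := Iff.rfl

lemma measurableSet_cylinder {A : Type*} [MeasurableSpace A] [MeasurableSingletonClass A]
    (s : Finset ℤ) (y : ℤ → A) :
    MeasurableSet (cylinder s y) := by
  have h : cylinder s y = ⋂ i ∈ (s : Set ℤ), (fun x : ℤ → A => x i) ⁻¹' {y i} := by
    ext x; simp [mem_cyl]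
  rw [h]
  exact MeasurableSet.biInter s.countable_toSet fun i _ =>
    (measurable_pi_apply i) (measurableSet_singleton _)

lemma config_meas {A : Type*} [MeasurableSpace A] [Nonempty A]
    (μ : Measure (ℤ → A)) (ρ : ℤ → A → ℝ)
    (hρnn : ∀ i a, 0 ≤ ρ i a) (hprod : IsProductMeasure μ ρ)
    (s : Finset ℤ) (g : ↥s → A) :
    μ (cylinder s (fun n => if h : n ∈ s then g ⟨n, h⟩ else Classical.arbitrary A))
      = ENNReal.ofReal (∏ i : ↥s, ρ ↑i (g i)) := by
  rw [hprod, ← ENNReal.ofReal_prod_of_nonneg (fun i _ => hρnn _ _)]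
  congr 1
  rw [Finset.univ_eq_attach, ← Finset.prod_attach s
    (fun n => ρ n (if h : n ∈ s then g ⟨n, h⟩ else Classical.arbitrary A))]
  refine Finset.prod_congr rfl fun i _ => ?_
  rw [dif_pos i.2]

lemma sqrt_prod' {ι : Type*} (s : Finset ι) (f : ι → ℝ) (hf : ∀ i ∈ s, 0 ≤ f i) :
    Real.sqrt (∏ i ∈ s, f i) = ∏ i ∈ s, Real.sqrt (f i) := by
  induction s using Finset.cons_induction with
  | empty => simp
  | cons a s ha ih =>
    rw [Finset.prod_cons, Finset.prod_cons, Real.sqrt_mul (hf a (Finset.mem_cons_self a s)),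
      ih (fun i hi => hf i (Finset.mem_cons_of_mem hi))]


lemma cut_sets {A : Type*} [Fintype A] [MeasurableSpace A] [MeasurableSingletonClass A]
    [Nonempty A]
    (ρ : ℤ → A → ℝ) (hnn : ∀ i a, 0 ≤ ρ i a)
    (μ ν : Measure (ℤ → A)) (hμ : IsProductMeasure μ ρ)
    (hν : IsProductMeasure ν (fun i => ρ (i + 1)))
    (s : Finset ℤ) :
    ∃ E : Set (ℤ → A), MeasurableSet E ∧
      μ E ≤ ENNReal.ofReal (∏ i ∈ s, ∑ a, Real.sqrt (ρ i a * ρ (i + 1) a)) ∧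
      ν Eᶜ ≤ ENNReal.ofReal (∏ i ∈ s, ∑ a, Real.sqrt (ρ i a * ρ (i + 1) a)) := by
  classical
  set P : (↥s → A) → ℝ := fun g => ∏ i : ↥s, ρ ↑i (g i) with hP
  set Q : (↥s → A) → ℝ := fun g => ∏ i : ↥s, ρ (↑i + 1) (g i) with hQ
  have hPnn : ∀ g, 0 ≤ P g := fun g => Finset.prod_nonneg fun i _ => hnn _ _
  have hQnn : ∀ g, 0 ≤ Q g := fun g => Finset.prod_nonneg fun i _ => hnn _ _
  set yg : (↥s → A) → (ℤ → A) :=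
    fun g n => if h : n ∈ s then g ⟨n, h⟩ else Classical.arbitrary A with hyg
  set cyl : (↥s → A) → Set (ℤ → A) := fun g => cylinder s (yg g) with hcyl
  have hmem : ∀ (g : ↥s → A) (x : ℤ → A), x ∈ cyl g ↔ ∀ i : ↥s, x ↑i = g i := by
    intro g x
    constructor
    · intro hx i
      have h := hx ↑i i.2
      rw [h]; simp [yg]
    · intro hx i hi
      rw [hx ⟨i, hi⟩]; simp [yg, hi]
  have hμcyl : ∀ g, μ (cyl g) = ENNReal.ofReal (P g) := fun g => config_meas μ ρ hnn hμ s g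
  have hνcyl : ∀ g, ν (cyl g) = ENNReal.ofReal (Q g) :=
    fun g => config_meas ν (fun i => ρ (i + 1)) (fun i a => hnn _ _) hν s g
  have hdisj : ∀ g g' : ↥s → A, g ≠ g' → Disjoint (cyl g) (cyl g') := by
    intro g g' hne
    rw [Set.disjoint_left]
    intro x hx hx'
    apply hne
    funext i
    rw [← (hmem g x).1 hx i, (hmem g' x).1 hx' i]
  have hsum_meas_μ : ∀ T : Finset (↥s → A),
      μ (⋃ g ∈ T, cyl g) = ∑ g ∈ T, ENNReal.ofReal (P g) := by
    intro T
    rw [measure_biUnion_finset (fun g _ g' _ h => hdisj g g' h)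
      (fun g _ => measurableSet_cylinder s (yg g))]
    exact Finset.sum_congr rfl fun g _ => hμcyl g
  have hsum_meas_ν : ∀ T : Finset (↥s → A),
      ν (⋃ g ∈ T, cyl g) = ∑ g ∈ T, ENNReal.ofReal (Q g) := by
    intro T
    rw [measure_biUnion_finset (fun g _ g' _ h => hdisj g g' h)
      (fun g _ => measurableSet_cylinder s (yg g))]
    exact Finset.sum_congr rfl fun g _ => hνcyl g
  -- the affinity
  set Aff : ℝ := ∑ g : ↥s → A, Real.sqrt (P g * Q g) with hAff
  have haff : Aff = ∏ i : ↥s, ∑ a, Real.sqrt (ρ ↑i a * ρ (↑i + 1) a) := by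
    have h1 : ∀ g : ↥s → A, Real.sqrt (P g * Q g)
        = ∏ i : ↥s, Real.sqrt (ρ ↑i (g i) * ρ (↑i + 1) (g i)) := by
      intro g
      rw [hP, hQ, ← Finset.prod_mul_distrib]
      exact sqrt_prod' _ _ (fun i _ => mul_nonneg (hnn _ _) (hnn _ _))
    rw [hAff, Finset.sum_congr rfl (fun g _ => h1 g)]
    rw [Finset.prod_univ_sum (fun _ : ↥s => (Finset.univ : Finset A))
      (fun i a => Real.sqrt (ρ ↑i a * ρ (↑i + 1) a))]
    rw [Fintype.piFinset_univ]
  have hAffnn : 0 ≤ Aff := Finset.sum_nonneg fun g _ => Real.sqrt_nonneg _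
  have haff' : Aff = ∏ i ∈ s, ∑ a, Real.sqrt (ρ i a * ρ (i + 1) a) := by
    rw [haff, Finset.univ_eq_attach,
      Finset.prod_attach s (fun i => ∑ a, Real.sqrt (ρ i a * ρ (i + 1) a))]
  set T : Finset (↥s → A) := Finset.univ.filter (fun g => P g < Q g) with hT
  refine ⟨⋃ g ∈ T, cyl g, Finset.measurableSet_biUnion T
    (fun g _ => measurableSet_cylinder s (yg g)), ?_, ?_⟩
  · rw [hsum_meas_μ T, ← ENNReal.ofReal_sum_of_nonneg (fun g _ => hPnn g), ← haff']
    apply ENNReal.ofReal_le_ofReal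
    calc ∑ g ∈ T, P g ≤ ∑ g ∈ T, Real.sqrt (P g * Q g) := by
          refine Finset.sum_le_sum fun g hg => ?_
          have hlt : P g < Q g := (Finset.mem_filter.1 hg).2
          calc P g = Real.sqrt (P g * P g) := (Real.sqrt_mul_self (hPnn g)).symm
            _ ≤ Real.sqrt (P g * Q g) :=
              Real.sqrt_le_sqrt (mul_le_mul_of_nonneg_left hlt.le (hPnn g))
      _ ≤ Aff := Finset.sum_le_sum_of_subset_of_nonneg (Finset.subset_univ T)
          (fun g _ _ => Real.sqrt_nonneg _)
  · have hcompl : (⋃ g ∈ T, cyl g)ᶜ = ⋃ g ∈ Tᶜ, cyl g := by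
      ext x
      simp only [Set.mem_compl_iff, Set.mem_iUnion, exists_prop, Finset.mem_compl]
      constructor
      · intro hx
        refine ⟨fun i => x ↑i, ?_, (hmem _ x).2 fun i => rfl⟩
        intro hmemT
        exact hx ⟨fun i => x ↑i, hmemT, (hmem _ x).2 fun i => rfl⟩
      · rintro ⟨g, hgT, hxg⟩ ⟨g', hg'T, hxg'⟩
        apply hgT
        have : g = g' := by
          funext i
          rw [← (hmem g x).1 hxg i, (hmem g' x).1 hxg' i]
        rw [this]; exact hg'T
    rw [hcompl, hsum_meas_ν Tᶜ, ← ENNReal.ofReal_sum_of_nonneg (fun g _ => hQnn g), ← haff']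
    apply ENNReal.ofReal_le_ofReal
    calc ∑ g ∈ Tᶜ, Q g ≤ ∑ g ∈ Tᶜ, Real.sqrt (P g * Q g) := by
          refine Finset.sum_le_sum fun g hg => ?_
          have hle : Q g ≤ P g := by
            have := Finset.mem_compl.1 hg
            rw [hT, Finset.mem_filter] at this
            push_neg at this
            exact le_of_not_gt fun hc => (this (Finset.mem_univ g)).not_gt hc
          calc Q g = Real.sqrt (Q g * Q g) := (Real.sqrt_mul_self (hQnn g)).symm
            _ ≤ Real.sqrt (P g * Q g) :=
              Real.sqrt_le_sqrt (mul_le_mul_of_nonneg_right hle (hQnn g))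
      _ ≤ Aff := Finset.sum_le_sum_of_subset_of_nonneg (Finset.subset_univ Tᶜ)
          (fun g _ _ => Real.sqrt_nonneg _)

lemma measurable_shift {A : Type*} [MeasurableSpace A] :
    Measurable (shift : (ℤ → A) → (ℤ → A)) :=
  measurable_pi_lambda _ (fun i => measurable_pi_apply (i + 1))

lemma map_shift_prod {A : Type*} [MeasurableSpace A] [MeasurableSingletonClass A]
    (μ : Measure (ℤ → A)) (ρ : ℤ → A → ℝ)
    (hprod : IsProductMeasure μ ρ) :
    IsProductMeasure (μ.map shift) (fun i => ρ (i + 1)) := by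
  intro s y
  rw [Measure.map_apply measurable_shift (measurableSet_cylinder s y)]
  have hpre : shift ⁻¹' cylinder s y
      = cylinder (s.map ⟨fun i => i + 1, add_left_injective 1⟩) (fun n => y (n - 1)) := by
    ext x
    simp only [mem_preimage, mem_cyl, shift]
    constructor
    · intro h n hn
      rw [Finset.mem_map] at hn
      obtain ⟨j, hj, rfl⟩ := hn
      simpa using h j hj
    · intro h i hi
      have : i + 1 ∈ s.map ⟨fun i => i + 1, add_left_injective 1⟩ := by
        rw [Finset.mem_map]; exact ⟨i, hi, rfl⟩
      simpa using h (i + 1) this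
  rw [hpre, hprod, Finset.prod_map]
  simp

lemma meas_univ_one {A : Type*} [MeasurableSpace A] [Nonempty A]
    (μ : Measure (ℤ → A)) (ρ : ℤ → A → ℝ)
    (hprod : IsProductMeasure μ ρ) : μ Set.univ = 1 := by
  have h : cylinder (∅ : Finset ℤ) (fun _ => Classical.arbitrary A) = Set.univ := by
    ext x; simp [mem_cyl]
  have := hprod ∅ (fun _ => Classical.arbitrary A)
  rw [h] at this
  simpa using this


lemma key_summable {A : Type*} [Fintype A] [MeasurableSpace A] [MeasurableSingletonClass A]
    [Nonempty A]
    (ρ : ℤ → A → ℝ) (hρ : ∀ i, IsProbVec (ρ i))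
    (μ : Measure (ℤ → A)) (hprod : IsProductMeasure μ ρ)
    (hns : MeasEquiv (μ.map shift) μ) :
    Summable (fun i : ℤ => ∑ a, (ρ (i + 1) a - ρ i a) ^ 2) := by
  classical
  set ν := μ.map shift with hνdef
  have hνprod : IsProductMeasure ν (fun i => ρ (i + 1)) := map_shift_prod μ ρ hprod
  have hnn : ∀ i a, 0 ≤ ρ i a := fun i a => (hρ i).1 a
  have hle1 : ∀ i a, ρ i a ≤ 1 := by
    intro i a
    have h := Finset.single_le_sum (f := ρ i) (fun b _ => hnn i b) (Finset.mem_univ a)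
    rw [(hρ i).2] at h; exact h
  set g : ℤ → ℝ := fun i => ∑ a, (ρ (i + 1) a - ρ i a) ^ 2 with hgdef
  have hgnn : ∀ i, 0 ≤ g i := fun i => Finset.sum_nonneg fun a _ => sq_nonneg _
  by_contra hnotsum
  have hub : ∀ C : ℝ, ∃ s : Finset ℤ, C ≤ ∑ i ∈ s, g i := by
    by_contra h
    push_neg at h
    obtain ⟨C, hC⟩ := h
    exact hnotsum (summable_of_sum_le hgnn (fun u => (hC u).le))
  set α : ℤ → ℝ := fun i => ∑ a, Real.sqrt (ρ i a * ρ (i + 1) a) with hαdef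
  have hα_nonneg : ∀ i, 0 ≤ α i := fun i => Finset.sum_nonneg fun a _ => Real.sqrt_nonneg _
  have hα_exp : ∀ i, α i ≤ Real.exp (-(g i / 8)) := by
    intro i
    have hdsum : ∑ a, (Real.sqrt (ρ i a) - Real.sqrt (ρ (i + 1) a)) ^ 2 = 2 - 2 * α i := by
      have hpt : ∀ a : A, (Real.sqrt (ρ i a) - Real.sqrt (ρ (i + 1) a)) ^ 2
          = ρ i a + ρ (i + 1) a - 2 * Real.sqrt (ρ i a * ρ (i + 1) a) := by
        intro a
        have hm : Real.sqrt (ρ i a) * Real.sqrt (ρ (i + 1) a)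
            = Real.sqrt (ρ i a * ρ (i + 1) a) := (Real.sqrt_mul (hnn i a) _).symm
        rw [sub_sq, Real.sq_sqrt (hnn i a), Real.sq_sqrt (hnn (i + 1) a), mul_assoc, hm]
        ring
      rw [Finset.sum_congr rfl (fun a _ => hpt a), Finset.sum_sub_distrib,
        Finset.sum_add_distrib, (hρ i).2, (hρ (i + 1)).2, ← Finset.mul_sum]
      ring
    have hgd : g i ≤ 4 * (2 - 2 * α i) := by
      rw [← hdsum, Finset.mul_sum, hgdef]
      refine Finset.sum_le_sum fun a _ => ?_
      set x := Real.sqrt (ρ i a) with hx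
      set y := Real.sqrt (ρ (i + 1) a) with hy
      have hx0 : 0 ≤ x := Real.sqrt_nonneg _
      have hy0 : 0 ≤ y := Real.sqrt_nonneg _
      have hx1 : x ≤ 1 := Real.sqrt_le_one.mpr (hle1 i a)
      have hy1 : y ≤ 1 := Real.sqrt_le_one.mpr (hle1 (i + 1) a)
      have hxs : x ^ 2 = ρ i a := Real.sq_sqrt (hnn i a)
      have hys : y ^ 2 = ρ (i + 1) a := Real.sq_sqrt (hnn (i + 1) a)
      rw [← hxs, ← hys]
      have hkey : (0:ℝ) ≤ (x - y) ^ 2 * (4 - (x + y) ^ 2) :=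
        mul_nonneg (sq_nonneg _) (by nlinarith)
      nlinarith [hkey]
    have h18 : α i ≤ 1 - g i / 8 := by linarith
    have := Real.add_one_le_exp (-(g i / 8))
    linarith
  have hprodα : ∀ s : Finset ℤ, ∏ i ∈ s, α i ≤ Real.exp (-(∑ i ∈ s, g i) / 8) := by
    intro s
    calc ∏ i ∈ s, α i ≤ ∏ i ∈ s, Real.exp (-(g i / 8)) :=
          Finset.prod_le_prod (fun i _ => hα_nonneg i) (fun i _ => hα_exp i)
      _ = Real.exp (∑ i ∈ s, -(g i / 8)) := (Real.exp_sum s _).symm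
      _ = Real.exp (-(∑ i ∈ s, g i) / 8) := by
          congr 1
          rw [Finset.sum_congr rfl (fun i (_ : i ∈ s) =>
            show -(g i / 8) = (-1/8) * g i by ring), ← Finset.mul_sum]
          ring
  -- choose the cut sets
  have hEj : ∀ j : ℕ, ∃ E : Set (ℤ → A), MeasurableSet E ∧
      μ E ≤ (2⁻¹ : ℝ≥0∞) ^ (j + 2) ∧ ν Eᶜ ≤ (2⁻¹ : ℝ≥0∞) ^ (j + 2) := by
    intro j
    obtain ⟨s, hs⟩ := hub (8 * (((j : ℝ) + 2) * Real.log 2))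
    obtain ⟨E, hEmeas, hμE, hνE⟩ := cut_sets ρ hnn μ ν hprod hνprod s
    have hbound : ENNReal.ofReal (∏ i ∈ s, α i) ≤ (2⁻¹ : ℝ≥0∞) ^ (j + 2) := by
      have h1 : ∏ i ∈ s, α i ≤ (2⁻¹ : ℝ) ^ (j + 2) := by
        calc ∏ i ∈ s, α i ≤ Real.exp (-(∑ i ∈ s, g i) / 8) := hprodα s
          _ ≤ Real.exp (-(((j : ℝ) + 2) * Real.log 2)) := by
              apply Real.exp_le_exp.mpr; linarith
          _ = (2⁻¹ : ℝ) ^ (j + 2) := by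
              rw [show -(((j : ℝ) + 2) * Real.log 2) = ((j + 2 : ℕ) : ℝ) * (-Real.log 2) by
                push_cast; ring]
              rw [Real.exp_nat_mul, Real.exp_neg, Real.exp_log two_pos]
      calc ENNReal.ofReal (∏ i ∈ s, α i) ≤ ENNReal.ofReal ((2⁻¹ : ℝ) ^ (j + 2)) :=
            ENNReal.ofReal_le_ofReal h1
        _ = (2⁻¹ : ℝ≥0∞) ^ (j + 2) := by
            rw [ENNReal.ofReal_pow (by norm_num)]
            congr 1
            rw [ENNReal.ofReal_inv_of_pos two_pos]
            norm_num
    exact ⟨E, hEmeas, le_trans hμE hbound, le_trans hνE hbound⟩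
  choose E hEmeas hμE hνE using hEj
  set G : ℕ → Set (ℤ → A) := fun m => ⋃ j : ℕ, E (m + j) with hGdef
  have hGmeas : ∀ m, MeasurableSet (G m) := fun m => MeasurableSet.iUnion fun j => hEmeas _
  have hμG : ∀ m, μ (G m) ≤ (2⁻¹ : ℝ≥0∞) ^ (m + 1) := by
    intro m
    calc μ (G m) ≤ ∑' j : ℕ, μ (E (m + j)) := measure_iUnion_le _
      _ ≤ ∑' j : ℕ, (2⁻¹ : ℝ≥0∞) ^ (m + j + 2) := ENNReal.tsum_le_tsum fun j => hμE (m + j)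
      _ = (2⁻¹ : ℝ≥0∞) ^ (m + 2) * ∑' j : ℕ, (2⁻¹ : ℝ≥0∞) ^ j := by
          rw [← ENNReal.tsum_mul_left]
          congr 1; funext j; rw [← pow_add]; congr 1; omega
      _ = (2⁻¹ : ℝ≥0∞) ^ (m + 2) * 2 := by
          rw [ENNReal.tsum_geometric, ENNReal.one_sub_inv_two]
          congr 1
          simp
      _ = (2⁻¹ : ℝ≥0∞) ^ (m + 1) := by
          rw [pow_succ, mul_assoc, ENNReal.inv_mul_cancel (by norm_num) (by norm_num), mul_one]
  set F : Set (ℤ → A) := ⋂ m : ℕ, G m with hFdef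
  have hμF : μ F = 0 := by
    have hle : ∀ m : ℕ, μ F ≤ (2⁻¹ : ℝ≥0∞) ^ (m + 1) := fun m =>
      le_trans (measure_mono (Set.iInter_subset G m)) (hμG m)
    have htend : Tendsto (fun m : ℕ => (2⁻¹ : ℝ≥0∞) ^ (m + 1)) atTop (nhds 0) := by
      have := ENNReal.tendsto_pow_atTop_nhds_zero_of_lt_one
        (by norm_num : (2⁻¹ : ℝ≥0∞) < 1)
      exact this.comp (tendsto_add_atTop_nat 1)
    exact le_antisymm (ge_of_tendsto' htend hle) (zero_le)
  have hνuniv : ν Set.univ = 1 := meas_univ_one ν (fun i => ρ (i + 1)) hνprod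
  have hνfin : ν (G 0) ≠ ⊤ := by
    refine ne_top_of_le_ne_top ?_ (measure_mono (Set.subset_univ _))
    rw [hνuniv]; exact ENNReal.one_ne_top
  have hGanti : Antitone G := by
    intro m m' hmm'
    refine Set.iUnion_subset fun j => ?_
    have : m' + j = m + (m' - m + j) := by omega
    rw [this]
    exact Set.subset_iUnion (fun j => E (m + j)) (m' - m + j)
  have hνG : ∀ m, (2⁻¹ : ℝ≥0∞) ≤ ν (G m) := by
    intro m
    have hsub : Set.univ ⊆ G m ∪ (E m)ᶜ := by
      intro x _
      by_cases hx : x ∈ E m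
      · left
        have : x ∈ E (m + 0) := by rw [add_zero]; exact hx
        exact Set.mem_iUnion.2 ⟨0, this⟩
      · right; exact hx
    have h1 : (1 : ℝ≥0∞) ≤ ν (G m) + ν ((E m)ᶜ) := by
      rw [← hνuniv]
      exact le_trans (measure_mono hsub) (measure_union_le _ _)
    have h2 : ν ((E m)ᶜ) ≤ (4⁻¹ : ℝ≥0∞) := by
      refine le_trans (hνE m) ?_
      have : (2⁻¹ : ℝ≥0∞) ^ (m + 2) ≤ (2⁻¹ : ℝ≥0∞) ^ 2 :=
        pow_le_pow_of_le_one (by norm_num) (by norm_num) (by omega)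
      have h22 : ((2:ℝ≥0∞))⁻¹ ^ 2 = (4:ℝ≥0∞)⁻¹ := by
        rw [← ENNReal.inv_pow]; norm_num
      rw [h22] at this
      exact this
    by_contra hlt
    push_neg at hlt
    have h3 : ν (G m) + ν ((E m)ᶜ) < 2⁻¹ + 4⁻¹ :=
      ENNReal.add_lt_add_of_lt_of_le
        (ne_top_of_le_ne_top (by norm_num : (4⁻¹:ℝ≥0∞) ≠ ⊤) h2) hlt h2
    have h4 : (2⁻¹ : ℝ≥0∞) + 4⁻¹ < 1 := by
      have hh : (4⁻¹ : ℝ≥0∞) < 2⁻¹ := ENNReal.inv_lt_inv.mpr (by norm_num)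
      calc (2⁻¹ : ℝ≥0∞) + 4⁻¹ < 2⁻¹ + 2⁻¹ :=
            ENNReal.add_lt_add_left (by norm_num) hh
        _ = 1 := ENNReal.inv_two_add_inv_two
    exact absurd (le_trans h1 h3.le) (not_le.2 h4)
  have htendν : Tendsto (fun m => ν (G m)) atTop (nhds (ν F)) := by
    have := MeasureTheory.tendsto_measure_iInter_atTop (μ := ν) (s := G)
      (fun m => (hGmeas m).nullMeasurableSet) hGanti ⟨0, hνfin⟩
    exact this
  have hνF : (2⁻¹ : ℝ≥0∞) ≤ ν F := ge_of_tendsto' htendν hνG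
  have : ν F = 0 := hns.1 hμF
  rw [this] at hνF
  simp at hνF

lemma abs_prod_sub_prod {ι : Type*} (s : Finset ι) (f g : ι → ℝ)
    (hf0 : ∀ i ∈ s, 0 ≤ f i) (hf1 : ∀ i ∈ s, f i ≤ 1)
    (hg0 : ∀ i ∈ s, 0 ≤ g i) (hg1 : ∀ i ∈ s, g i ≤ 1) :
    |∏ i ∈ s, f i - ∏ i ∈ s, g i| ≤ ∑ i ∈ s, |f i - g i| := by
  induction s using Finset.cons_induction with
  | empty => simp
  | cons a s ha ih =>
    rw [Finset.prod_cons, Finset.prod_cons, Finset.sum_cons]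
    have h1 : ∀ i ∈ s, 0 ≤ f i := fun i hi => hf0 i (Finset.mem_cons_of_mem hi)
    have h2 : ∀ i ∈ s, f i ≤ 1 := fun i hi => hf1 i (Finset.mem_cons_of_mem hi)
    have h3 : ∀ i ∈ s, 0 ≤ g i := fun i hi => hg0 i (Finset.mem_cons_of_mem hi)
    have h4 : ∀ i ∈ s, g i ≤ 1 := fun i hi => hg1 i (Finset.mem_cons_of_mem hi)
    have hfa0 := hf0 a (Finset.mem_cons_self a s)
    have hfa1 := hf1 a (Finset.mem_cons_self a s)
    have hga0 := hg0 a (Finset.mem_cons_self a s)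
    have hga1 := hg1 a (Finset.mem_cons_self a s)
    have key : f a * ∏ i ∈ s, f i - g a * ∏ i ∈ s, g i
        = f a * (∏ i ∈ s, f i - ∏ i ∈ s, g i) + (f a - g a) * ∏ i ∈ s, g i := by ring
    rw [key]
    calc |f a * (∏ i ∈ s, f i - ∏ i ∈ s, g i) + (f a - g a) * ∏ i ∈ s, g i|
        ≤ |f a * (∏ i ∈ s, f i - ∏ i ∈ s, g i)| + |(f a - g a) * ∏ i ∈ s, g i| :=
          abs_add_le _ _
      _ = |f a| * |∏ i ∈ s, f i - ∏ i ∈ s, g i| + |f a - g a| * |∏ i ∈ s, g i| := by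
          rw [abs_mul, abs_mul]
      _ ≤ 1 * (∑ i ∈ s, |f i - g i|) + |f a - g a| * 1 := by
          refine add_le_add (mul_le_mul ?_ (ih h1 h2 h3 h4) (abs_nonneg _) zero_le_one)
            (mul_le_mul_of_nonneg_left ?_ (abs_nonneg _))
          · rw [abs_le]; exact ⟨by linarith, hfa1⟩
          · rw [abs_le]
            have := Finset.prod_nonneg h3
            exact ⟨by linarith, Finset.prod_le_one h3 h4⟩
      _ = |f a - g a| + ∑ i ∈ s, |f i - g i| := by ring

lemma telescope_bound {A : Type*} (ρ : ℤ → A → ℝ) (a : A) (i : ℤ) (n : ℕ) :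
    |ρ (i + n) a - ρ i a| ≤ ∑ m ∈ Finset.range n, |ρ (i + m + 1) a - ρ (i + m) a| := by
  induction n with
  | zero => simp
  | succ n ih =>
    rw [Finset.sum_range_succ]
    have h : (((n : ℕ) + 1 : ℕ) : ℤ) = (n : ℤ) + 1 := by push_cast; ring
    calc |ρ (i + ((n : ℕ) + 1 : ℕ)) a - ρ i a|
        = |(ρ (i + n + 1) a - ρ (i + n) a) + (ρ (i + n) a - ρ i a)| := by
          rw [h, ← add_assoc]; ring_nf
      _ ≤ |ρ (i + n + 1) a - ρ (i + n) a| + |ρ (i + n) a - ρ i a| := abs_add_le _ _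
      _ ≤ |ρ (i + n + 1) a - ρ (i + n) a|
            + ∑ m ∈ Finset.range n, |ρ (i + m + 1) a - ρ (i + m) a| := by gcongr
      _ = _ := by ring

/-- For a nonsingular Doeblin Bernoulli shift, the block probabilities
`ρ_i^{⊕k}(c) = ∏_j ρ_{i+j}(c_j)` and `ρ_i^{⊗k}(c) = ∏_j ρ_i(c_j)` are square-summably
close. -/
theorem blockProb_sq_summable {A : Type*} [Fintype A]
    [MeasurableSpace A] [MeasurableSingletonClass A]
    (ρ : ℤ → A → ℝ) (hρ : ∀ i, IsProbVec (ρ i))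
    (μ : Measure (ℤ → A)) (hprod : IsProductMeasure μ ρ)
    (hns : MeasEquiv (μ.map shift) μ)
    (hdoeblin : ∃ δ > 0, ∀ (i : ℤ) (b : A), δ < ρ i b)
    (k : ℕ) (hk : 0 < k) (c : Fin k → A) :
    Summable (fun i : ℤ => (blockProb ρ i c - ∏ j : Fin k, ρ i (c j)) ^ 2) := by
  classical
  haveI : Nonempty A := ⟨c ⟨0, hk⟩⟩
  have hnn : ∀ i a, 0 ≤ ρ i a := fun i a => (hρ i).1 a
  have hle1 : ∀ i a, ρ i a ≤ 1 := by
    intro i a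
    have h := Finset.single_le_sum (f := ρ i) (fun b _ => hnn i b) (Finset.mem_univ a)
    rw [(hρ i).2] at h; exact h
  have hkey : Summable (fun i : ℤ => ∑ a, (ρ (i + 1) a - ρ i a) ^ 2) :=
    key_summable ρ hρ μ hprod hns
  have hshift : ∀ (m : ℕ) (a : A),
      Summable (fun i : ℤ => (ρ (i + m + 1) a - ρ (i + m) a) ^ 2) := by
    intro m a
    have h1 : Summable (fun i : ℤ => (ρ (i + 1) a - ρ i a) ^ 2) := by
      refine Summable.of_nonneg_of_le (fun i => sq_nonneg _) (fun i => ?_) hkey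
      exact Finset.single_le_sum (f := fun b => (ρ (i + 1) b - ρ i b) ^ 2)
        (fun b _ => sq_nonneg _) (Finset.mem_univ a)
    have h2 := (Equiv.addRight (m : ℤ)).summable_iff.mpr h1
    exact h2.congr (fun i => rfl)
  set W : Fin k → ℤ → ℝ := fun j i =>
    ∑ m ∈ Finset.range k, (ρ (i + m + 1) (c j) - ρ (i + m) (c j)) ^ 2 with hW
  have hWsum : ∀ j : Fin k, Summable (W j) := by
    intro j
    exact summable_sum (fun m _ => hshift m (c j))
  set B : ℤ → ℝ := fun i => (k : ℝ) * ∑ j : Fin k, (k : ℝ) * W j i with hB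
  have hBsum : Summable B := by
    apply Summable.mul_left
    exact summable_sum (fun j _ => (hWsum j).mul_left _)
  refine Summable.of_nonneg_of_le (fun i => sq_nonneg _) (fun i => ?_) hBsum
  set D : Fin k → ℝ := fun j => ρ (i + (j.val : ℤ)) (c j) - ρ i (c j) with hD
  have habs : |blockProb ρ i c - ∏ j : Fin k, ρ i (c j)| ≤ ∑ j : Fin k, |D j| := by
    unfold blockProb
    exact abs_prod_sub_prod Finset.univ _ _
      (fun j _ => hnn _ _) (fun j _ => hle1 _ _) (fun j _ => hnn _ _) (fun j _ => hle1 _ _)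
  have h1 : (blockProb ρ i c - ∏ j : Fin k, ρ i (c j)) ^ 2 ≤ (∑ j : Fin k, |D j|) ^ 2 := by
    rw [← sq_abs]
    exact pow_le_pow_left₀ (abs_nonneg _) habs 2
  have h2 : (∑ j : Fin k, |D j|) ^ 2 ≤ (k : ℝ) * ∑ j : Fin k, (D j) ^ 2 := by
    have := sq_sum_le_card_mul_sum_sq (s := (Finset.univ : Finset (Fin k)))
      (f := fun j => |D j|)
    simpa [sq_abs] using this
  have h3 : ∀ j : Fin k, (D j) ^ 2 ≤ (k : ℝ) * W j i := by
    intro j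
    have ht : |D j| ≤ ∑ m ∈ Finset.range k, |ρ (i + m + 1) (c j) - ρ (i + m) (c j)| := by
      refine le_trans (telescope_bound ρ (c j) i j.val) ?_
      exact Finset.sum_le_sum_of_subset_of_nonneg
        (Finset.range_subset_range.mpr j.2.le) (fun m _ _ => abs_nonneg _)
    calc (D j) ^ 2 = |D j| ^ 2 := (sq_abs _).symm
      _ ≤ (∑ m ∈ Finset.range k, |ρ (i + m + 1) (c j) - ρ (i + m) (c j)|) ^ 2 :=
        pow_le_pow_left₀ (abs_nonneg _) ht 2
      _ ≤ (k : ℝ) * W j i := by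
        have := sq_sum_le_card_mul_sum_sq (s := Finset.range k)
          (f := fun m => |ρ (i + (m : ℤ) + 1) (c j) - ρ (i + (m : ℤ)) (c j)|)
        simpa [sq_abs, hW] using this
  calc (blockProb ρ i c - ∏ j : Fin k, ρ i (c j)) ^ 2
      ≤ (∑ j : Fin k, |D j|) ^ 2 := h1
    _ ≤ (k : ℝ) * ∑ j : Fin k, (D j) ^ 2 := h2
    _ ≤ B i := by
        rw [hB]
        exact mul_le_mul_of_nonneg_left (Finset.sum_le_sum fun j _ => h3 j)
          (Nat.cast_nonneg k)
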